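/- For every r-uniform hypergraph H with at least one edge, the entropic density equals the blowup density: b_entropy(H) = b(H). -/

import Mathlib

open Finset

/-- A finite hypergraph: a finite vertex set (of naturals) together with a
finite set of edges, each edge being a subset of the vertex set. -/
structure NatHypergraph where
  verts : Finset ℕ
  edges : Finset (Finset ℕ)
  edge_sub : ∀ e ∈ edges, e ⊆ verts

namespace NatHypergraph

/-- `H` is `r`-uniform if every edge has exactly `r` vertices. -/
def IsUniform (r : ℕ) (H : NatHypergraph) : Prop := ∀ e ∈ H.edges, e.card = r

/-- `H` contains a copy of `F` (i.e. `F` is a subgraph of `H` after an injective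
relabelling of the vertices of `F`). -/
def ContainsCopy (F H : NatHypergraph) : Prop :=
  ∃ f : ℕ → ℕ, Set.InjOn f ↑F.verts ∧ (∀ v ∈ F.verts, f v ∈ H.verts) ∧
    ∀ e ∈ F.edges, e.image f ∈ H.edges

/-- `H` is `𝓕`-free: it contains no member of `𝓕` as a subgraph. -/
def Free (𝓕 : Set NatHypergraph) (H : NatHypergraph) : Prop := ∀ F ∈ 𝓕, ¬ F.ContainsCopy H

/-- `f` is a homomorphism from `F` to `H`: the image of every edge of `F` is an
edge of `H`. -/
def IsHom (f : ℕ → ℕ) (F H : NatHypergraph) : Prop :=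
  (∀ v ∈ F.verts, f v ∈ H.verts) ∧ ∀ e ∈ F.edges, e.image f ∈ H.edges

/-- `H` is `𝓕`-hom-free: no member of `𝓕` admits a homomorphism to `H`. -/
def HomFree (𝓕 : Set NatHypergraph) (H : NatHypergraph) : Prop :=
  ∀ F ∈ 𝓕, ∀ f : ℕ → ℕ, ¬ IsHom f F H

/-- The degree of a vertex: the number of edges containing it. -/
def degree (H : NatHypergraph) (v : ℕ) : ℕ := (H.edges.filter (fun e => v ∈ e)).card

/-- `H` is `r`-partite: the vertices can be coloured with `r` colours so that every
edge contains exactly one vertex of each colour. -/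
def Partite (r : ℕ) (H : NatHypergraph) : Prop :=
  ∃ f : ℕ → Fin r, ∀ e ∈ H.edges, ∀ c : Fin r, (e.filter (fun v => f v = c)).card = 1

/-- `H` and `G` are isomorphic hypergraphs. -/
def Isomorphic (H G : NatHypergraph) : Prop :=
  ∃ f : ℕ → ℕ, Set.BijOn f ↑H.verts ↑G.verts ∧ H.edges.image (Finset.image f) = G.edges

end NatHypergraph

/-- The Turán number `ex(n, 𝓕)`: the maximum number of edges in an `𝓕`-free
`r`-uniform hypergraph on `n` vertices. -/
noncomputable def exNum (r n : ℕ) (𝓕 : Set NatHypergraph) : ℕ :=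
  sSup {m : ℕ | ∃ H : NatHypergraph, H.verts = Finset.range n ∧ H.IsUniform r ∧
    H.Free 𝓕 ∧ H.edges.card = m}

/-- The Turán density `π(𝓕) = lim_{n → ∞} ex(n, 𝓕) / (n choose r)`. -/
noncomputable def turanDensity (r : ℕ) (𝓕 : Set NatHypergraph) : ℝ :=
  Filter.lim (Filter.map (fun n : ℕ => (exNum r n 𝓕 : ℝ) / (n.choose r : ℝ)) Filter.atTop)

/-- The three edges of the `(r-i,i)`-tent on vertex set `{1, …, 2r-1}`. -/
def tentEdges (r i : ℕ) : Finset (Finset ℕ) :=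
  {Finset.Icc 1 r,
   Finset.Icc 1 i ∪ Finset.Icc (r + 1) (2 * r - i - 1) ∪ {2 * r - 1},
   Finset.Icc (i + 1) r ∪ Finset.Icc (2 * r - i) (2 * r - 1)}

/-- The `(r-i,i)`-tent `Δ_{(r-i,i)}`. -/
def tent (r i : ℕ) : NatHypergraph where
  verts := Finset.Icc 1 (2 * r - 1) ∪ (tentEdges r i).biUnion id
  edges := tentEdges r i
  edge_sub := fun e he =>
    (Finset.subset_biUnion_of_mem id he).trans Finset.subset_union_right

/-- The family `𝓕_{r,k} = {Δ_{(r-i,i)} : 1 ≤ i ≤ k}`. -/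
def tentFamily (r k : ℕ) : Set NatHypergraph := {H | ∃ i, 1 ≤ i ∧ i ≤ k ∧ H = tent r i}

/-- The Lagrangian of a hypergraph: the maximum of `∑_{e ∈ E} ∏_{v ∈ e} w v` over
nonnegative vertex weightings summing to `1`. -/
noncomputable def lagrangian (H : NatHypergraph) : ℝ :=
  sSup {s : ℝ | ∃ w : ℕ → ℝ, (∀ v, 0 ≤ w v) ∧ (∑ v ∈ H.verts, w v) = 1 ∧
    s = ∑ e ∈ H.edges, ∏ v ∈ e, w v}

/-- The blowup density `b(H) = r! · L(H)`. -/
noncomputable def blowupDensity (r : ℕ) (H : NatHypergraph) : ℝ :=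
  (r.factorial : ℝ) * lagrangian H

/-- Membership in the set `X_{r,k}`: `0 < x 1 ≤ x 2 ≤ ⋯ ≤ x r = 1`, and
`x i + x j ≤ x (i+j)` whenever `1 ≤ i ≤ k` and `i ≤ j ≤ r - i`. -/
def memX (r k : ℕ) (x : ℕ → ℝ) : Prop :=
  0 < x 1 ∧ (∀ i, 1 ≤ i → i < r → x i ≤ x (i + 1)) ∧ x r = 1 ∧
    ∀ i j, 1 ≤ i → i ≤ k → i ≤ j → i + j ≤ r → x i + x j ≤ x (i + j)

/-- The interval `[L, R]` is uniform for `x`: `x i = x L + (i - L) * x 1` on it. -/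
def UniformIntv (x : ℕ → ℝ) (L R : ℕ) : Prop :=
  ∀ i, L ≤ i → i ≤ R → x i = x L + ((i - L : ℕ) : ℝ) * x 1

/-- `[L, R]` is a segment: a uniform interval (inside `[0, r]`) that is not properly
contained in any other uniform interval. -/
def IsSegment (r : ℕ) (x : ℕ → ℝ) (L R : ℕ) : Prop :=
  L ≤ R ∧ R ≤ r ∧ UniformIntv x L R ∧
    ∀ L' R', L' ≤ L → R ≤ R' → R' ≤ r → UniformIntv x L' R' → L' = L ∧ R' = R

/-- Shannon entropy (base 2) of a finitely supported distribution `p` on `s`. -/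
noncomputable def ent {α : Type*} (s : Finset α) (p : α → ℝ) : ℝ :=
  ∑ a ∈ s, -(p a * Real.logb 2 (p a))

/-- Entropy of the pushforward of `p` along `g` (the entropy of `g(X)`). -/
noncomputable def pushEnt {α β : Type*} [DecidableEq β] (s : Finset α) (p : α → ℝ)
    (g : α → β) : ℝ :=
  ent (s.image g) (fun b => ∑ a ∈ s.filter (fun a => g a = b), p a)

/-- All tuples in `V(H)^r`. -/
def tupleSpace (r : ℕ) (H : NatHypergraph) : Finset (Fin r → ℕ) :=
  Fintype.piFinset fun _ : Fin r => H.verts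

/-- The joint entropy `H(X_1, …, X_r)` of a random tuple with distribution `p`. -/
noncomputable def jointEnt (r : ℕ) (H : NatHypergraph) (p : (Fin r → ℕ) → ℝ) : ℝ :=
  ent (tupleSpace r H) p

/-- The entropy `H(X_i, X_{i+1}, …, X_r)` of the suffix starting at position `i`
(1-indexed) of a random tuple with distribution `p`. -/
noncomputable def suffixEnt (r : ℕ) (H : NatHypergraph) (p : (Fin r → ℕ) → ℝ) (i : ℕ) : ℝ :=
  pushEnt (tupleSpace r H) p (fun t (j : Fin r) => if i - 1 ≤ (j : ℕ) then t j else 0)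

/-- The entropy `H(X_{j+1})` of the single coordinate `j` (0-indexed). -/
noncomputable def coordEnt (r : ℕ) (H : NatHypergraph) (p : (Fin r → ℕ) → ℝ) (j : Fin r) : ℝ :=
  pushEnt (tupleSpace r H) p (fun t => t j)

/-- `p` is the distribution of a random edge with uniform ordering on `H`:
nonnegative, total mass one, supported on tuples whose value set is an edge, and
exchangeable (invariant under permutations of the coordinates). -/
def IsRandomEdge (r : ℕ) (H : NatHypergraph) (p : (Fin r → ℕ) → ℝ) : Prop :=
  (∀ t, 0 ≤ p t) ∧
  (∑ t ∈ tupleSpace r H, p t = 1) ∧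
  (∀ t, p t ≠ 0 → Finset.image t Finset.univ ∈ H.edges) ∧
  (∀ σ : Equiv.Perm (Fin r), ∀ t, p (t ∘ σ) = p t)

/-- Every pair of distinct vertices lies in a common edge. -/
def TwoCovered (H : NatHypergraph) : Prop :=
  ∀ u ∈ H.verts, ∀ v ∈ H.verts, u ≠ v → ∃ e ∈ H.edges, u ∈ e ∧ v ∈ e

/-- `G` is a blowup of `G0`. -/
def IsBlowup (G0 G : NatHypergraph) : Prop :=
  ∃ B : ℕ → Finset ℕ,
    (∀ v ∈ G0.verts, (B v).Nonempty) ∧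
    (∀ u ∈ G0.verts, ∀ v ∈ G0.verts, u ≠ v → Disjoint (B u) (B v)) ∧
    G.verts = G0.verts.biUnion B ∧
    ∀ e : Finset ℕ, e ∈ G.edges ↔
      ∃ e0 ∈ G0.edges, e ⊆ e0.biUnion B ∧ ∀ v ∈ e0, (e ∩ B v).card = 1

/-- `G` is symmetrised: a blowup of a 2-covered `r`-uniform hypergraph. -/
def Symmetrised (r : ℕ) (G : NatHypergraph) : Prop :=
  ∃ G0 : NatHypergraph, G0.IsUniform r ∧ TwoCovered G0 ∧ IsBlowup G0 G

/-- The family `𝓣_{r,k}` of `r`-uniform hypergraphs with exactly three edges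
`A, B, C` such that `A ⊆ B ∪ C`, `(B ∩ C) \ A ≠ ∅` and `|A ∩ B| ≥ r - k`. -/
def TFamily (r k : ℕ) : Set NatHypergraph :=
  {H | H.IsUniform r ∧ ∃ A B C : Finset ℕ,
    H.verts = A ∪ B ∪ C ∧ H.edges = {A, B, C} ∧
    A ≠ B ∧ A ≠ C ∧ B ≠ C ∧
    A ⊆ B ∪ C ∧ ((B ∩ C) \ A).Nonempty ∧ r - k ≤ (A ∩ B).card}

/-- `H` is `Lset`-intersecting: any two distinct edges intersect in a number of
vertices belonging to `Lset`. -/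
def LIntersecting (Lset : Set ℕ) (H : NatHypergraph) : Prop :=
  ∀ e ∈ H.edges, ∀ e' ∈ H.edges, e ≠ e' → (e ∩ e').card ∈ Lset

/-- `H` is a `λ`-tent for the partition `lam = (λ_1, …, λ_m)` of `r`: it has
`m + 1` edges `e 0, e 1, …, e m`, each of size `r`, with `|e 0 ∩ e i| = λ_i`,
the sets `e 0 ∩ e 1, …, e 0 ∩ e m` partitioning `e 0`, and a vertex `v` with
`e i ∩ e j = {v}` for all `1 ≤ i < j ≤ m`. -/
def IsGeneralTent (r : ℕ) (lam : List ℕ) (H : NatHypergraph) : Prop :=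
  ∃ e : ℕ → Finset ℕ,
    H.verts = (Finset.range (lam.length + 1)).biUnion e ∧
    H.edges = (Finset.range (lam.length + 1)).image e ∧
    H.edges.card = lam.length + 1 ∧
    (∀ i ∈ Finset.range (lam.length + 1), (e i).card = r) ∧
    (∀ i, 1 ≤ i → i ≤ lam.length → (e 0 ∩ e i).card = lam.getD (i - 1) 0) ∧
    e 0 = (Finset.Icc 1 lam.length).biUnion (fun i => e 0 ∩ e i) ∧
    (∀ i j, 1 ≤ i → i < j → j ≤ lam.length → Disjoint (e 0 ∩ e i) (e 0 ∩ e j)) ∧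
    (∃ v : ℕ, ∀ i j, 1 ≤ i → i < j → j ≤ lam.length → e i ∩ e j = {v})

/-- The balanced complete `r`-partite `r`-uniform hypergraph `T^r(n)` on the vertex
set `{0, …, n-1}`, with parts given by residues modulo `r`: the edges are exactly
the `r`-subsets whose vertices have pairwise distinct residues mod `r`, i.e. those
meeting each part in exactly one vertex. -/
def turanGraph (r n : ℕ) : NatHypergraph where
  verts := Finset.range n
  edges := (Finset.powersetCard r (Finset.range n)).filter
    (fun e => ∀ u ∈ e, ∀ v ∈ e, u ≠ v → u % r ≠ v % r)
  edge_sub := by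
    intro e he
    simp only [Finset.mem_filter, Finset.mem_powersetCard] at he
    exact he.1.1

section EntropyAux

open Finset

namespace EntAux

noncomputable def S (H : NatHypergraph) (w : ℕ → ℝ) : ℝ := ∑ e ∈ H.edges, ∏ v ∈ e, w v

noncomputable def D (H : NatHypergraph) (w : ℕ → ℝ) (v : ℕ) : ℝ :=
  ∑ e ∈ H.edges, if v ∈ e then ∏ x ∈ e.erase v, w x else 0

noncomputable def mar (r : ℕ) (H : NatHypergraph) (p : (Fin r → ℕ) → ℝ) (j : Fin r) (v : ℕ) : ℝ :=
  ∑ t ∈ (tupleSpace r H).filter (fun t => t j = v), p t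

lemma S_nonneg (H : NatHypergraph) (w : ℕ → ℝ) (hw : ∀ v, 0 ≤ w v) : 0 ≤ S H w :=
  Finset.sum_nonneg fun _ _ => Finset.prod_nonneg fun v _ => hw v

lemma lag_bddAbove (H : NatHypergraph) : BddAbove {s : ℝ | ∃ w : ℕ → ℝ, (∀ v, 0 ≤ w v) ∧
    (∑ v ∈ H.verts, w v) = 1 ∧ s = ∑ e ∈ H.edges, ∏ v ∈ e, w v} := by
  refine ⟨(H.edges.card : ℝ), ?_⟩
  rintro s ⟨w, hw0, hw1, rfl⟩
  calc ∑ e ∈ H.edges, ∏ v ∈ e, w v ≤ ∑ _e ∈ H.edges, (1:ℝ) := by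
        refine Finset.sum_le_sum fun e he => Finset.prod_le_one (fun v _ => hw0 v) fun v hv => ?_
        rw [← hw1]
        exact Finset.single_le_sum (fun u _ => hw0 u) (H.edge_sub e he hv)
    _ = (H.edges.card : ℝ) := by simp

lemma le_lag (H : NatHypergraph) (w : ℕ → ℝ) (hw0 : ∀ v, 0 ≤ w v)
    (hw1 : (∑ v ∈ H.verts, w v) = 1) : S H w ≤ lagrangian H :=
  le_csSup (lag_bddAbove H) ⟨w, hw0, hw1, rfl⟩

lemma lag_pos (r : ℕ) (hr : 1 ≤ r) (H : NatHypergraph) (hH : H.IsUniform r)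
    (hne : H.edges.Nonempty) : 0 < lagrangian H := by
  obtain ⟨e0, he0⟩ := hne
  have hr0 : (0:ℝ) < r := by exact_mod_cast hr
  set w : ℕ → ℝ := fun v => if v ∈ e0 then (r : ℝ)⁻¹ else 0 with hwdef
  have hw0 : ∀ v, 0 ≤ w v := by
    intro v; simp only [hwdef]; split
    · positivity
    · exact le_rfl
  have hw1 : ∑ v ∈ H.verts, w v = 1 := by
    rw [← Finset.sum_subset (H.edge_sub e0 he0)
      (fun x _ hx => by simp only [hwdef]; exact if_neg hx)]
    rw [Finset.sum_congr rfl (fun v hv => by simp only [hwdef]; exact if_pos hv)]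
    rw [Finset.sum_const, hH e0 he0, nsmul_eq_mul]
    field_simp
  have h1 : (0:ℝ) < ∏ v ∈ e0, w v := by
    rw [Finset.prod_congr rfl (fun v hv => by simp only [hwdef]; exact if_pos hv),
      Finset.prod_const]
    positivity
  have h2 : ∏ v ∈ e0, w v ≤ S H w :=
    Finset.single_le_sum (f := fun e => ∏ v ∈ e, w v)
      (fun e _ => Finset.prod_nonneg fun v _ => hw0 v) he0
  exact lt_of_lt_of_le (lt_of_lt_of_le h1 h2) (le_lag H w hw0 hw1)

lemma exists_maximizer (H : NatHypergraph) (hV : H.verts.Nonempty) :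
    ∃ w : ℕ → ℝ, (∀ v, 0 ≤ w v) ∧ (∀ v ∉ H.verts, w v = 0) ∧ (∑ v ∈ H.verts, w v) = 1 ∧
      (∀ u : ℕ → ℝ, (∀ v, 0 ≤ u v) → (∑ v ∈ H.verts, u v) = 1 → S H u ≤ S H w) := by
  classical
  set A : Set (ℕ → ℝ) :=
    {w | ∀ v, w v ∈ (if v ∈ H.verts then Set.Icc (0:ℝ) 1 else ({0} : Set ℝ))} with hAdef
  have hAcomp : IsCompact A := by
    have : A = Set.univ.pi (fun v => if v ∈ H.verts then Set.Icc (0:ℝ) 1 else ({0} : Set ℝ)) := by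
      ext w; simp [Set.mem_pi, hAdef]
    rw [this]
    refine isCompact_univ_pi fun v => ?_
    split
    · exact isCompact_Icc
    · exact isCompact_singleton
  set B : Set (ℕ → ℝ) := {w | (∑ v ∈ H.verts, w v) = 1} with hBdef
  have hBclosed : IsClosed B :=
    isClosed_eq (continuous_finset_sum _ fun v _ => continuous_apply v) continuous_const
  have hKcomp : IsCompact (A ∩ B) := hAcomp.inter_right hBclosed
  have hScont : Continuous (fun w : ℕ → ℝ => S H w) :=
    continuous_finset_sum _ fun e _ => continuous_finset_prod _ fun v _ => continuous_apply v
  obtain ⟨v0, hv0⟩ := hV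
  have hKne : (A ∩ B).Nonempty := by
    refine ⟨fun v => if v = v0 then 1 else 0, fun v => ?_, ?_⟩
    · by_cases hv : v ∈ H.verts
      · rw [if_pos hv]
        show (if v = v0 then (1:ℝ) else 0) ∈ Set.Icc (0:ℝ) 1
        by_cases hvv : v = v0
        · rw [if_pos hvv]; exact Set.mem_Icc.mpr ⟨zero_le_one, le_rfl⟩
        · rw [if_neg hvv]; exact Set.mem_Icc.mpr ⟨le_rfl, zero_le_one⟩
      · rw [if_neg hv]
        show (if v = v0 then (1:ℝ) else 0) ∈ ({0} : Set ℝ)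
        have hvv : v ≠ v0 := fun h => hv (h ▸ hv0)
        rw [if_neg hvv]; rfl
    · simp only [hBdef, Set.mem_setOf_eq]
      rw [Finset.sum_ite_eq' H.verts v0 (fun _ => (1:ℝ)), if_pos hv0]
  obtain ⟨w, hwK, hmax⟩ := hKcomp.exists_isMaxOn hKne hScont.continuousOn
  have hmax' := isMaxOn_iff.mp hmax
  have hw0 : ∀ v, 0 ≤ w v := by
    intro v
    have := hwK.1 v
    by_cases hv : v ∈ H.verts
    · rw [if_pos hv] at this; exact this.1
    · rw [if_neg hv] at this; rw [Set.mem_singleton_iff] at this; rw [this]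
  have hwz : ∀ v ∉ H.verts, w v = 0 := by
    intro v hv
    have := hwK.1 v
    rwa [if_neg hv, Set.mem_singleton_iff] at this
  refine ⟨w, hw0, hwz, hwK.2, ?_⟩
  intro u hu0 hu1
  set u' : ℕ → ℝ := fun v => if v ∈ H.verts then u v else 0 with hu'def
  have hu'1 : (∑ v ∈ H.verts, u' v) = 1 := by
    rw [Finset.sum_congr rfl (fun v hv => by simp only [hu'def]; exact if_pos hv)]
    exact hu1
  have hu'K : u' ∈ A ∩ B := by
    refine ⟨fun v => ?_, hu'1⟩
    by_cases hv : v ∈ H.verts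
    · rw [if_pos hv]
      refine ⟨by simp only [hu'def]; rw [if_pos hv]; exact hu0 v, ?_⟩
      simp only [hu'def]; rw [if_pos hv, ← hu1]
      exact Finset.single_le_sum (fun x _ => hu0 x) hv
    · rw [if_neg hv]; simp only [hu'def]; rw [if_neg hv]; rfl
  have hSeq : S H u = S H u' := by
    refine Finset.sum_congr rfl fun e he => Finset.prod_congr rfl fun v hv => ?_
    simp only [hu'def]; rw [if_pos (H.edge_sub e he hv)]
  rw [hSeq]
  exact hmax' u' hu'K

lemma euler (r : ℕ) (H : NatHypergraph) (hH : H.IsUniform r) (w : ℕ → ℝ) :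
    ∑ v ∈ H.verts, w v * D H w v = r * S H w := by
  have key : ∀ e ∈ H.edges,
      ∑ v ∈ H.verts, (if v ∈ e then w v * ∏ x ∈ e.erase v, w x else 0) = r * ∏ v ∈ e, w v := by
    intro e he
    rw [Finset.sum_ite_mem, Finset.inter_eq_right.mpr (H.edge_sub e he)]
    rw [Finset.sum_congr rfl (fun v hv => Finset.mul_prod_erase e w hv)]
    rw [Finset.sum_const, hH e he, nsmul_eq_mul]
  calc ∑ v ∈ H.verts, w v * D H w v
      = ∑ v ∈ H.verts, ∑ e ∈ H.edges, (if v ∈ e then w v * ∏ x ∈ e.erase v, w x else 0) := by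
        refine Finset.sum_congr rfl fun v _ => ?_
        rw [D, Finset.mul_sum]
        exact Finset.sum_congr rfl fun e _ => by rw [mul_ite, mul_zero]
    _ = ∑ e ∈ H.edges, ∑ v ∈ H.verts, (if v ∈ e then w v * ∏ x ∈ e.erase v, w x else 0) :=
        Finset.sum_comm
    _ = ∑ e ∈ H.edges, r * ∏ v ∈ e, w v := Finset.sum_congr rfl key
    _ = r * S H w := by rw [S, Finset.mul_sum]

lemma prod_update2 (e : Finset ℕ) (w : ℕ → ℝ) (u v : ℕ) (huv : u ≠ v) (ε : ℝ) :
    (∏ x ∈ e, (w x + (if x = u then ε else 0) - (if x = v then ε else 0)))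
      = ∏ x ∈ e, w x
        + ε * (if u ∈ e then ∏ x ∈ e.erase u, w x else 0)
        - ε * (if v ∈ e then ∏ x ∈ e.erase v, w x else 0)
        - ε^2 * (if u ∈ e ∧ v ∈ e then ∏ x ∈ (e.erase u).erase v, w x else 0) := by
  classical
  set w' : ℕ → ℝ := fun x => w x + (if x = u then ε else 0) - (if x = v then ε else 0) with hw'
  have hwu : w' u = w u + ε := by simp [hw', huv]
  have hwv : w' v = w v - ε := by simp [hw', huv.symm]
  have hother : ∀ x, x ≠ u → x ≠ v → w' x = w x := by
    intro x hxu hxv; simp [hw', hxu, hxv]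
  by_cases hu : u ∈ e <;> by_cases hv : v ∈ e
  · have hveu : v ∈ e.erase u := Finset.mem_erase.mpr ⟨huv.symm, hv⟩
    have huev : u ∈ e.erase v := Finset.mem_erase.mpr ⟨huv, hu⟩
    have hP : ∏ x ∈ (e.erase u).erase v, w' x = ∏ x ∈ (e.erase u).erase v, w x := by
      refine Finset.prod_congr rfl fun x hx => ?_
      have hx1 := (Finset.mem_erase.mp hx).1
      have hx2 := (Finset.mem_erase.mp (Finset.mem_erase.mp hx).2).1
      exact hother x hx2 hx1
    have e1 : ∏ x ∈ e, w' x = (w u + ε) * ((w v - ε) * ∏ x ∈ (e.erase u).erase v, w x) := by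
      rw [← Finset.mul_prod_erase e w' hu, ← Finset.mul_prod_erase (e.erase u) w' hveu,
        hP, hwu, hwv]
    have e2 : ∏ x ∈ e, w x = w u * (w v * ∏ x ∈ (e.erase u).erase v, w x) := by
      rw [Finset.mul_prod_erase (e.erase u) w hveu, Finset.mul_prod_erase e w hu]
    have e3 : ∏ x ∈ e.erase u, w x = w v * ∏ x ∈ (e.erase u).erase v, w x :=
      (Finset.mul_prod_erase (e.erase u) w hveu).symm
    have e4 : ∏ x ∈ e.erase v, w x = w u * ∏ x ∈ (e.erase u).erase v, w x := by
      rw [Finset.erase_right_comm]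
      exact (Finset.mul_prod_erase (e.erase v) w huev).symm
    rw [if_pos hu, if_pos hv, if_pos ⟨hu, hv⟩, e1, e2, e3, e4]; ring
  · have hP : ∏ x ∈ e.erase u, w' x = ∏ x ∈ e.erase u, w x := by
      refine Finset.prod_congr rfl fun x hx => ?_
      have hx1 := (Finset.mem_erase.mp hx).1
      have hx2 : x ≠ v := fun h => hv (h ▸ (Finset.mem_erase.mp hx).2)
      exact hother x hx1 hx2
    have e1 : ∏ x ∈ e, w' x = (w u + ε) * ∏ x ∈ e.erase u, w x := by
      rw [← Finset.mul_prod_erase e w' hu, hP, hwu]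
    have e2 : ∏ x ∈ e, w x = w u * ∏ x ∈ e.erase u, w x :=
      (Finset.mul_prod_erase e w hu).symm
    rw [if_pos hu, if_neg hv, if_neg (fun h => hv h.2), e1, e2]; ring
  · have hP : ∏ x ∈ e.erase v, w' x = ∏ x ∈ e.erase v, w x := by
      refine Finset.prod_congr rfl fun x hx => ?_
      have hx1 := (Finset.mem_erase.mp hx).1
      have hx2 : x ≠ u := fun h => hu (h ▸ (Finset.mem_erase.mp hx).2)
      exact hother x hx2 hx1
    have e1 : ∏ x ∈ e, w' x = (w v - ε) * ∏ x ∈ e.erase v, w x := by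
      rw [← Finset.mul_prod_erase e w' hv, hP, hwv]
    have e2 : ∏ x ∈ e, w x = w v * ∏ x ∈ e.erase v, w x :=
      (Finset.mul_prod_erase e w hv).symm
    rw [if_neg hu, if_pos hv, if_neg (fun h => hu h.1), e1, e2]; ring
  · have hP : ∏ x ∈ e, w' x = ∏ x ∈ e, w x := by
      refine Finset.prod_congr rfl fun x hx => ?_
      exact hother x (fun h => hu (h ▸ hx)) (fun h => hv (h ▸ hx))
    rw [if_neg hu, if_neg hv, if_neg (fun h => hu h.1), hP]; ring

lemma S_update2 (H : NatHypergraph) (w : ℕ → ℝ) (u v : ℕ) (huv : u ≠ v) (ε : ℝ) :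
    S H (fun x => w x + (if x = u then ε else 0) - (if x = v then ε else 0))
      = S H w + ε * D H w u - ε * D H w v
        - ε^2 * ∑ e ∈ H.edges, (if u ∈ e ∧ v ∈ e then ∏ x ∈ (e.erase u).erase v, w x else 0) := by
  simp only [S, D, Finset.mul_sum, ← Finset.sum_add_distrib, ← Finset.sum_sub_distrib]
  exact Finset.sum_congr rfl fun e _ => prod_update2 e w u v huv ε

lemma kkt (r : ℕ) (hr : 1 ≤ r) (H : NatHypergraph) (hH : H.IsUniform r)
    (hne : H.edges.Nonempty) :
    ∃ w : ℕ → ℝ, (∀ v, 0 ≤ w v) ∧ (∀ v ∉ H.verts, w v = 0) ∧ (∑ v ∈ H.verts, w v) = 1 ∧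
      S H w = lagrangian H ∧
      ∀ v ∈ H.verts, w v ≠ 0 → D H w v = r * S H w := by
  classical
  have hV : H.verts.Nonempty := by
    obtain ⟨e0, he0⟩ := hne
    have : e0.Nonempty := Finset.card_pos.mp (by rw [hH e0 he0]; omega)
    exact ⟨this.choose, H.edge_sub e0 he0 this.choose_spec⟩
  obtain ⟨w, hw0, hwz, hw1, hmax⟩ := exists_maximizer H hV
  have hlag : S H w = lagrangian H := by
    refine le_antisymm (le_lag H w hw0 hw1) (csSup_le ⟨S H w, w, hw0, hw1, rfl⟩ ?_)
    rintro s ⟨u, hu0, hu1, rfl⟩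
    exact hmax u hu0 hu1
  have key : ∀ u ∈ H.verts, ∀ v ∈ H.verts, w v ≠ 0 → D H w u ≤ D H w v := by
    intro u hu v hv hv0
    by_contra hlt
    push_neg at hlt
    have huv : u ≠ v := fun h => lt_irrefl _ (h ▸ hlt)
    set M := ∑ e ∈ H.edges, (if u ∈ e ∧ v ∈ e then ∏ x ∈ (e.erase u).erase v, w x else 0) with hM
    have hM0 : 0 ≤ M := Finset.sum_nonneg fun e _ => by
      split
      · exact Finset.prod_nonneg fun x _ => hw0 x
      · exact le_rfl
    have hwv : 0 < w v := lt_of_le_of_ne (hw0 v) (Ne.symm hv0)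
    set δ := D H w u - D H w v with hδdef
    have hδ : 0 < δ := sub_pos.mpr hlt
    set ε := min (w v) (δ / (2 * (M + 1))) with hε
    have hε0 : 0 < ε := lt_min hwv (by positivity)
    have hεv : ε ≤ w v := min_le_left _ _
    have hεδ : ε ≤ δ / (2 * (M + 1)) := min_le_right _ _
    set w' : ℕ → ℝ := fun x => w x + (if x = u then ε else 0) - (if x = v then ε else 0)
      with hw'def
    have hw'eq : ∀ x, w' x = w x + (if x = u then ε else 0) - (if x = v then ε else 0) :=
      fun x => rfl
    have hw'v : w' v = w v - ε := by
      rw [hw'eq v, if_neg (Ne.symm huv), if_pos rfl]; ring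
    have hw'u : w' u = w u + ε := by
      rw [hw'eq u, if_pos rfl, if_neg huv]; ring
    have hw'other : ∀ x, x ≠ u → x ≠ v → w' x = w x := by
      intro x h1 h2; rw [hw'eq x, if_neg h1, if_neg h2]; ring
    have hw'0 : ∀ x, 0 ≤ w' x := by
      intro x
      by_cases hx : x = v
      · subst hx; rw [hw'v]; linarith
      · by_cases hxu : x = u
        · subst hxu; rw [hw'u]; linarith [hw0 x]
        · rw [hw'other x hxu hx]; exact hw0 x
    have hw'1 : ∑ x ∈ H.verts, w' x = 1 := by
      simp only [hw'def]
      rw [Finset.sum_sub_distrib, Finset.sum_add_distrib, hw1,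
        Finset.sum_ite_eq' H.verts u (fun _ => ε), Finset.sum_ite_eq' H.verts v (fun _ => ε),
        if_pos hu, if_pos hv]
      ring
    have hquad : ε^2 * M < ε * δ := by
      have h1 : ε * M ≤ (δ / (2 * (M + 1))) * M := mul_le_mul_of_nonneg_right hεδ hM0
      have h2 : (δ / (2 * (M + 1))) * M ≤ δ / 2 := by
        rw [div_mul_eq_mul_div, div_le_div_iff₀ (by positivity) (by norm_num)]
        nlinarith
      have h4 : ε * (ε * M) ≤ ε * (δ/2) :=
        mul_le_mul_of_nonneg_left (le_trans h1 h2) hε0.le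
      have h5 : ε * (δ/2) < ε * δ := mul_lt_mul_of_pos_left (by linarith) hε0
      calc ε^2 * M = ε * (ε * M) := by ring
        _ ≤ ε * (δ/2) := h4
        _ < ε * δ := h5
    have hcontr : S H w < S H w' := by
      rw [S_update2 H w u v huv ε, ← hM]
      have hεδ2 : ε * D H w u - ε * D H w v = ε * δ := by rw [hδdef]; ring
      linarith [hquad, hεδ2]
    exact absurd (hmax w' hw'0 hw'1) (not_le.mpr hcontr)
  refine ⟨w, hw0, hwz, hw1, hlag, ?_⟩
  intro v hv hv0
  have heq : ∀ x ∈ H.verts, w x * D H w x = w x * D H w v := by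
    intro x hx
    by_cases hx0 : w x = 0
    · rw [hx0, zero_mul, zero_mul]
    · rw [le_antisymm (key x hx v hv hv0) (key v hv x hx hx0)]
  calc D H w v = (∑ x ∈ H.verts, w x) * D H w v := by rw [hw1, one_mul]
    _ = ∑ x ∈ H.verts, w x * D H w v := Finset.sum_mul _ _ _
    _ = ∑ x ∈ H.verts, w x * D H w x := (Finset.sum_congr rfl heq).symm
    _ = r * S H w := euler r H hH w


lemma sum_comp_perm (r : ℕ) (H : NatHypergraph) (σ : Equiv.Perm (Fin r))
    (F : (Fin r → ℕ) → ℝ) :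
    ∑ t ∈ tupleSpace r H, F (t ∘ σ) = ∑ t ∈ tupleSpace r H, F t := by
  refine Finset.sum_equiv (Equiv.arrowCongr σ.symm (Equiv.refl ℕ)) ?_ ?_
  · intro t
    simp only [tupleSpace, Fintype.mem_piFinset, Equiv.arrowCongr_apply, Equiv.coe_refl,
      Function.comp, Equiv.symm_symm, id_eq]
    constructor
    · intro h i; exact h _
    · intro h i; simpa using h (σ.symm i)
  · intro t _
    rfl

lemma mem_image_of_tuple (r : ℕ) (H : NatHypergraph) (e : Finset ℕ) (t : Fin r → ℕ)
    (ht : Finset.image t Finset.univ = e) (k : Fin r) : t k ∈ e :=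
  ht ▸ Finset.mem_image_of_mem t (Finset.mem_univ k)

lemma tuple_injective (r : ℕ) (e : Finset ℕ) (hcard : e.card = r) (t : Fin r → ℕ)
    (ht : Finset.image t Finset.univ = e) : Function.Injective t := by
  have h1 : (Finset.image t Finset.univ).card = (Finset.univ : Finset (Fin r)).card := by
    rw [ht, hcard, Finset.card_univ, Fintype.card_fin]
  have h2 := Finset.card_image_iff.mp h1
  intro a b hab
  exact h2 (Finset.mem_coe.mpr (Finset.mem_univ a)) (Finset.mem_coe.mpr (Finset.mem_univ b)) hab

lemma image_comp_perm (r : ℕ) (t : Fin r → ℕ) (σ : Equiv.Perm (Fin r)) :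
    Finset.image (t ∘ σ) Finset.univ = Finset.image t Finset.univ := by
  rw [← Finset.image_image]
  congr 1
  exact Finset.image_univ_equiv σ

lemma card_tuples (r : ℕ) (H : NatHypergraph) (e : Finset ℕ) (he : e ⊆ H.verts)
    (hcard : e.card = r) :
    ((tupleSpace r H).filter (fun t => Finset.image t Finset.univ = e)).card
      = r.factorial := by
  classical
  set g := e.orderIsoOfFin hcard with hg
  have hperm_card : (Finset.univ : Finset (Equiv.Perm (Fin r))).card = r.factorial := by
    rw [Finset.card_univ, Fintype.card_perm, Fintype.card_fin]
  rw [← hperm_card]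
  have hmem' : ∀ t, t ∈ (tupleSpace r H).filter (fun t => Finset.image t Finset.univ = e) →
      ∀ k, t k ∈ e := fun t ht k => mem_image_of_tuple r H e t (Finset.mem_filter.mp ht).2 k
  have hinj' : ∀ t, t ∈ (tupleSpace r H).filter (fun t => Finset.image t Finset.univ = e) →
      Function.Injective t := fun t ht => tuple_injective r e hcard t (Finset.mem_filter.mp ht).2
  refine Finset.card_bij'
    (fun t ht => Equiv.ofBijective (fun k => g.symm ⟨t k, hmem' t ht k⟩)
      ((Fintype.bijective_iff_injective_and_card _).mpr
        ⟨fun a b hab => hinj' t ht (congrArg Subtype.val (g.symm.injective hab)), rfl⟩))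
    (fun σ _ => fun k => (g (σ k) : ℕ)) (fun t ht => Finset.mem_univ _) ?_ ?_ ?_
  · intro σ _
    rw [Finset.mem_filter]
    have himg : Finset.image (fun k => (g (σ k) : ℕ)) Finset.univ = e := by
      apply Finset.eq_of_subset_of_card_le
      · intro x hx
        obtain ⟨k, _, rfl⟩ := Finset.mem_image.mp hx
        exact (g (σ k)).2
      · have hinj2 : Function.Injective (fun k => ((g (σ k)) : ℕ)) := fun a b hab =>
          σ.injective (g.injective (Subtype.coe_injective hab))
        rw [Finset.card_image_of_injective _ hinj2, Finset.card_univ, Fintype.card_fin, hcard]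
    exact ⟨Fintype.mem_piFinset.mpr fun k => he ((g (σ k)).2), himg⟩
  · intro t ht
    funext k
    show (g (g.symm ⟨t k, hmem' t ht k⟩) : ℕ) = t k
    rw [OrderIso.apply_symm_apply]
  · intro σ hσ
    refine Equiv.ext fun k => ?_
    show g.symm ⟨(g (σ k) : ℕ), _⟩ = σ k
    rw [Subtype.coe_eta, OrderIso.symm_apply_apply]

lemma sum_tuples_image (r : ℕ) (H : NatHypergraph) (e : Finset ℕ) (he : e ⊆ H.verts)
    (hcard : e.card = r) (f : ℕ → ℝ) :
    ∑ t ∈ (tupleSpace r H).filter (fun t => Finset.image t Finset.univ = e), ∏ i, f (t i)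
      = (r.factorial : ℝ) * ∏ x ∈ e, f x := by
  classical
  have hsummand : ∀ t ∈ (tupleSpace r H).filter (fun t => Finset.image t Finset.univ = e),
      (∏ i, f (t i)) = ∏ x ∈ e, f x := by
    intro t ht
    have ht2 := (Finset.mem_filter.mp ht).2
    have hinj := tuple_injective r e hcard t ht2
    rw [← ht2, Finset.prod_image (fun a _ b _ h => hinj h)]
  rw [Finset.sum_congr rfl hsummand, Finset.sum_const, card_tuples r H e he hcard,
    nsmul_eq_mul]

lemma sum_tuples_image_weight (r : ℕ) (hr : 1 ≤ r) (H : NatHypergraph) (e : Finset ℕ)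
    (he : e ⊆ H.verts) (hcard : e.card = r) (f g : ℕ → ℝ) (j0 : Fin r) :
    ∑ t ∈ (tupleSpace r H).filter (fun t => Finset.image t Finset.univ = e),
        (∏ i, f (t i)) * g (t j0)
      = ((r-1).factorial : ℝ) * ((∏ x ∈ e, f x) * ∑ x ∈ e, g x) := by
  classical
  set L : Fin r → ℝ := fun j => ∑ t ∈ (tupleSpace r H).filter
      (fun t => Finset.image t Finset.univ = e), (∏ i, f (t i)) * g (t j) with hLdef
  have hLconst : ∀ j : Fin r, L j = L j0 := by
    intro j
    set σ := Equiv.swap j0 j with hσ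
    have hσj0 : σ j0 = j := Equiv.swap_apply_left j0 j
    have key : ∀ t : Fin r → ℕ,
        (if Finset.image (t ∘ σ) Finset.univ = e then (∏ i, f ((t ∘ σ) i)) * g ((t ∘ σ) j0) else 0)
          = (if Finset.image t Finset.univ = e then (∏ i, f (t i)) * g (t j) else 0) := by
      intro t
      rw [image_comp_perm r t σ]
      by_cases hie : Finset.image t Finset.univ = e
      · rw [if_pos hie, if_pos hie]
        have ha : (∏ i, f ((t ∘ σ) i)) = ∏ i, f (t i) := Equiv.prod_comp σ (fun i => f (t i))
        have hb : g ((t ∘ σ) j0) = g (t j) := by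
          simp only [Function.comp_apply, hσj0]
        rw [ha, hb]
      · rw [if_neg hie, if_neg hie]
    have h1 : L j0 = ∑ t ∈ tupleSpace r H,
        (if Finset.image t Finset.univ = e then (∏ i, f (t i)) * g (t j0) else 0) :=
      Finset.sum_filter _ _
    have h2 : L j = ∑ t ∈ tupleSpace r H,
        (if Finset.image t Finset.univ = e then (∏ i, f (t i)) * g (t j) else 0) :=
      Finset.sum_filter _ _
    have h3 := sum_comp_perm r H σ (fun t => if Finset.image t Finset.univ = e then
        (∏ i, f (t i)) * g (t j0) else 0)
    rw [h1, h2, ← h3]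
    exact Finset.sum_congr rfl fun t _ => (key t).symm
  have hsum : ∑ j : Fin r, L j = (r.factorial : ℝ) * ((∏ x ∈ e, f x) * ∑ x ∈ e, g x) := by
    rw [hLdef]
    rw [Finset.sum_comm]
    have key : ∀ t ∈ (tupleSpace r H).filter (fun t => Finset.image t Finset.univ = e),
        ∑ j : Fin r, (∏ i, f (t i)) * g (t j) = (∏ i, f (t i)) * ∑ x ∈ e, g x := by
      intro t ht
      have ht2 := (Finset.mem_filter.mp ht).2
      have hinj := tuple_injective r e hcard t ht2
      rw [← Finset.mul_sum]
      congr 1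
      rw [← ht2, Finset.sum_image (fun a _ b _ h => hinj h)]
    rw [Finset.sum_congr rfl key, ← Finset.sum_mul, sum_tuples_image r H e he hcard f]
    ring
  have hcount : ∑ j : Fin r, L j = (r : ℝ) * L j0 := by
    rw [Finset.sum_congr rfl (fun j _ => hLconst j), Finset.sum_const, Finset.card_univ,
      Fintype.card_fin, nsmul_eq_mul]
  have hrfact : (r.factorial : ℝ) = (r : ℝ) * ((r-1).factorial : ℝ) := by
    rw [← Nat.cast_mul, Nat.mul_factorial_pred (by omega)]
  have hr0 : (r : ℝ) ≠ 0 := by positivity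
  have : (r : ℝ) * L j0 = (r : ℝ) * (((r-1).factorial : ℝ) * ((∏ x ∈ e, f x) * ∑ x ∈ e, g x)) := by
    rw [← hcount, hsum, hrfact]; ring
  exact mul_left_cancel₀ hr0 this

lemma filter_image_mem (r : ℕ) (H : NatHypergraph) (e : Finset ℕ) (he : e ∈ H.edges) :
    ((tupleSpace r H).filter (fun t => Finset.image t Finset.univ ∈ H.edges)).filter
        (fun t => Finset.image t Finset.univ = e)
      = (tupleSpace r H).filter (fun t => Finset.image t Finset.univ = e) := by
  rw [Finset.filter_filter]
  exact Finset.filter_congr fun t _ => ⟨fun h => h.2, fun h => ⟨h ▸ he, h⟩⟩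

lemma sum_tuples_edge (r : ℕ) (H : NatHypergraph) (hH : H.IsUniform r) (f : ℕ → ℝ) :
    ∑ t ∈ tupleSpace r H,
        (if Finset.image t Finset.univ ∈ H.edges then ∏ i, f (t i) else 0)
      = (r.factorial : ℝ) * S H f := by
  classical
  rw [← Finset.sum_filter]
  rw [← Finset.sum_fiberwise_of_maps_to (t := H.edges)
    (g := fun t : Fin r → ℕ => Finset.image t Finset.univ)
    (fun t ht => (Finset.mem_filter.mp ht).2) _]
  rw [S, Finset.mul_sum]
  refine Finset.sum_congr rfl fun e he => ?_
  rw [filter_image_mem r H e he, sum_tuples_image r H e (H.edge_sub e he) (hH e he) f]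

lemma sum_tuples_edge_weight (r : ℕ) (hr : 1 ≤ r) (H : NatHypergraph) (hH : H.IsUniform r)
    (f g : ℕ → ℝ) (j0 : Fin r) :
    ∑ t ∈ tupleSpace r H,
        (if Finset.image t Finset.univ ∈ H.edges then (∏ i, f (t i)) * g (t j0) else 0)
      = ((r-1).factorial : ℝ) * ∑ e ∈ H.edges, ((∏ x ∈ e, f x) * ∑ x ∈ e, g x) := by
  classical
  rw [← Finset.sum_filter]
  rw [← Finset.sum_fiberwise_of_maps_to (t := H.edges)
    (g := fun t : Fin r → ℕ => Finset.image t Finset.univ)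
    (fun t ht => (Finset.mem_filter.mp ht).2) _]
  rw [Finset.mul_sum]
  refine Finset.sum_congr rfl fun e he => ?_
  rw [filter_image_mem r H e he,
    sum_tuples_image_weight r hr H e (H.edge_sub e he) (hH e he) f g j0]

lemma image_eval (r : ℕ) (H : NatHypergraph) (hV : H.verts.Nonempty) (j : Fin r) :
    (tupleSpace r H).image (fun t => t j) = H.verts := by
  classical
  ext v
  simp only [Finset.mem_image]
  constructor
  · rintro ⟨t, ht, rfl⟩
    exact (Fintype.mem_piFinset.mp ht) j
  · intro hv
    exact ⟨fun _ => v, Fintype.mem_piFinset.mpr fun _ => hv, rfl⟩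

lemma mar_nonneg (r : ℕ) (H : NatHypergraph) (p : (Fin r → ℕ) → ℝ) (hp : ∀ t, 0 ≤ p t)
    (j : Fin r) (v : ℕ) : 0 ≤ mar r H p j v :=
  Finset.sum_nonneg fun t _ => hp t

lemma mar_total (r : ℕ) (H : NatHypergraph) (p : (Fin r → ℕ) → ℝ) (j : Fin r) :
    ∑ v ∈ H.verts, mar r H p j v = ∑ t ∈ tupleSpace r H, p t := by
  classical
  exact Finset.sum_fiberwise_of_maps_to
    (fun t ht => (Fintype.mem_piFinset.mp ht) j) p

lemma exchangeable_sum (r : ℕ) (H : NatHypergraph) (p : (Fin r → ℕ) → ℝ)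
    (hperm : ∀ σ : Equiv.Perm (Fin r), ∀ t, p (t ∘ σ) = p t)
    (h : ℕ → ℝ) (j j0 : Fin r) :
    ∑ t ∈ tupleSpace r H, p t * h (t j) = ∑ v ∈ H.verts, mar r H p j0 v * h v := by
  classical
  have step1 : ∑ t ∈ tupleSpace r H, p t * h (t j) = ∑ t ∈ tupleSpace r H, p t * h (t j0) := by
    set σ := Equiv.swap j0 j with hσ
    have hσj0 : σ j0 = j := Equiv.swap_apply_left j0 j
    have key : ∀ t : Fin r → ℕ, p (t ∘ σ) * h ((t ∘ σ) j0) = p t * h (t j) := by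
      intro t
      rw [hperm σ t]
      simp only [Function.comp_apply, hσj0]
    rw [← Finset.sum_congr rfl (fun t _ => key t),
      sum_comp_perm r H σ (fun t => p t * h (t j0))]
  rw [step1]
  rw [← Finset.sum_fiberwise_of_maps_to (s := tupleSpace r H) (t := H.verts)
    (g := fun t : Fin r → ℕ => t j0)
    (fun t ht => (Fintype.mem_piFinset.mp ht) j0) (fun t => p t * h (t j0))]
  refine Finset.sum_congr rfl fun v _ => ?_
  rw [mar, Finset.sum_mul]
  refine Finset.sum_congr rfl fun t ht => ?_
  rw [(Finset.mem_filter.mp ht).2]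

lemma cross_entropy_sum (r : ℕ) (H : NatHypergraph)
    (w : ℕ → ℝ) (Z : ℝ) (hZ : 0 < Z) (p q : (Fin r → ℕ) → ℝ)
    (hp1 : ∑ t ∈ tupleSpace r H, p t = 1)
    (hperm : ∀ σ : Equiv.Perm (Fin r), ∀ t, p (t ∘ σ) = p t)
    (hsupp : ∀ t ∈ tupleSpace r H, p t ≠ 0 →
      Finset.image t Finset.univ ∈ H.edges ∧ ∀ i, w (t i) ≠ 0)
    (hform : ∀ t, q t =
      (if Finset.image t Finset.univ ∈ H.edges then (∏ i, w (t i)) else 0) / Z)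
    (j0 : Fin r) :
    ∑ t ∈ tupleSpace r H, -(p t * Real.logb 2 (q t))
      = Real.logb 2 Z - (r : ℝ) * ∑ v ∈ H.verts, mar r H p j0 v * Real.logb 2 (w v) := by
  classical
  have key : ∀ t ∈ tupleSpace r H, -(p t * Real.logb 2 (q t))
      = p t * Real.logb 2 Z - ∑ i : Fin r, p t * Real.logb 2 (w (t i)) := by
    intro t ht
    by_cases hp0 : p t = 0
    · simp [hp0]
    · obtain ⟨hedge, hw0⟩ := hsupp t ht hp0
      rw [hform t, if_pos hedge]
      have hprod : (∏ i, w (t i)) ≠ 0 := Finset.prod_ne_zero_iff.mpr fun i _ => hw0 i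
      rw [Real.logb_div hprod hZ.ne', Real.logb_prod _ _ (fun i _ => hw0 i),
        ← Finset.mul_sum]
      ring
  rw [Finset.sum_congr rfl key, Finset.sum_sub_distrib, ← Finset.sum_mul, hp1, one_mul]
  congr 1
  rw [Finset.sum_comm]
  rw [Finset.sum_congr rfl (fun i (_ : i ∈ (Finset.univ : Finset (Fin r))) =>
    exchangeable_sum r H p hperm (fun v => Real.logb 2 (w v)) i j0)]
  rw [Finset.sum_const, Finset.card_univ, Fintype.card_fin, nsmul_eq_mul]

lemma verts_nonempty (r : ℕ) (hr : 1 ≤ r) (H : NatHypergraph) (hH : H.IsUniform r)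
    (hne : H.edges.Nonempty) : H.verts.Nonempty := by
  obtain ⟨e0, he0⟩ := hne
  have : e0.Nonempty := Finset.card_pos.mp (by rw [hH e0 he0]; omega)
  exact ⟨this.choose, H.edge_sub e0 he0 this.choose_spec⟩

end EntAux
end EntropyAux

/-- **Proposition 2.9 (entropic density equals blowup density).** For every `r`-uniform
hypergraph `H` with at least one edge, the blowup density `b(H)` is the maximum of
`2^{H(X_1, …, X_r) − r · H(X_1)}` over all random edges `(X_1, …, X_r)` with uniform
ordering on `H`; that is, `b_entropy(H) = b(H)`. -/
theorem entropic_density_eq_blowupDensity (r : ℕ) (hr : 1 ≤ r) (H : NatHypergraph)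
    (hH : H.IsUniform r) (hne : H.edges.Nonempty) :
    IsGreatest {d : ℝ | ∃ p : (Fin r → ℕ) → ℝ, IsRandomEdge r H p ∧
        d = (2 : ℝ) ^ (jointEnt r H p - r * coordEnt r H p ⟨0, by omega⟩)}
      (blowupDensity r H) := by
  classical
  set j0 : Fin r := ⟨0, by omega⟩ with hj0def
  have hV : H.verts.Nonempty := EntAux.verts_nonempty r hr H hH hne
  have hfact : (0:ℝ) < (r.factorial : ℝ) := by exact_mod_cast r.factorial_pos
  constructor
  · -- membership
    obtain ⟨w, hw0, hwz, hw1, hlag, hkkt⟩ := EntAux.kkt r hr H hH hne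
    have hSpos : 0 < EntAux.S H w := hlag ▸ EntAux.lag_pos r hr H hH hne
    set Z : ℝ := (r.factorial : ℝ) * EntAux.S H w with hZdef
    have hZ : 0 < Z := mul_pos hfact hSpos
    set p : (Fin r → ℕ) → ℝ := fun t =>
      (if Finset.image t Finset.univ ∈ H.edges then (∏ i, w (t i)) else 0) / Z with hpdef
    have hp1 : ∑ t ∈ tupleSpace r H, p t = 1 := by
      simp only [hpdef]
      rw [← Finset.sum_div, EntAux.sum_tuples_edge r H hH w, ← hZdef, div_self hZ.ne']
    have hperm : ∀ σ : Equiv.Perm (Fin r), ∀ t, p (t ∘ σ) = p t := by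
      intro σ t
      simp only [hpdef]
      rw [EntAux.image_comp_perm r t σ]
      congr 2
      exact Equiv.prod_comp σ (fun i => w (t i))
    have hprandom : IsRandomEdge r H p := by
      refine ⟨?_, hp1, ?_, hperm⟩
      · intro t
        simp only [hpdef]
        split
        · exact div_nonneg (Finset.prod_nonneg fun i _ => hw0 (t i)) hZ.le
        · rw [zero_div]
      · intro t hpt
        by_contra hmem
        apply hpt
        simp only [hpdef]
        rw [if_neg hmem, zero_div]
    have hmar : ∀ v ∈ H.verts, EntAux.mar r H p j0 v = w v := by
      intro v hv
      have h1 : ∀ t : Fin r → ℕ, (if t j0 = v then p t else 0)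
          = (if Finset.image t Finset.univ ∈ H.edges then
              (∏ i, w (t i)) * (if t j0 = v then (1:ℝ) else 0) else 0) / Z := by
        intro t
        by_cases hjv : t j0 = v <;> by_cases hedge : Finset.image t Finset.univ ∈ H.edges <;>
          simp [hpdef, hjv, hedge]
      have h2 : EntAux.mar r H p j0 v
          = (∑ t ∈ tupleSpace r H, (if Finset.image t Finset.univ ∈ H.edges then
              (∏ i, w (t i)) * (if t j0 = v then (1:ℝ) else 0) else 0)) / Z := by
        rw [EntAux.mar, Finset.sum_filter, Finset.sum_congr rfl (fun t _ => h1 t),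
          ← Finset.sum_div]
      rw [h2, EntAux.sum_tuples_edge_weight r hr H hH w (fun x => if x = v then (1:ℝ) else 0) j0]
      have h3 : ∀ e ∈ H.edges,
          (∏ x ∈ e, w x) * (∑ x ∈ e, if x = v then (1:ℝ) else 0)
            = w v * (if v ∈ e then ∏ x ∈ e.erase v, w x else 0) := by
        intro e _
        rw [Finset.sum_ite_eq' e v (fun _ => (1:ℝ))]
        by_cases hve : v ∈ e
        · rw [if_pos hve, if_pos hve, ← Finset.mul_prod_erase e w hve]; ring
        · rw [if_neg hve, if_neg hve]; ring
      rw [Finset.sum_congr rfl h3, ← Finset.mul_sum]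
      have hD : ∑ e ∈ H.edges, (if v ∈ e then ∏ x ∈ e.erase v, w x else 0) = EntAux.D H w v :=
        rfl
      rw [hD]
      by_cases hw0v : w v = 0
      · rw [hw0v]; simp
      · rw [hkkt v hv hw0v, hZdef]
        have hrfact : (r.factorial : ℝ) = (r : ℝ) * ((r-1).factorial : ℝ) := by
          rw [← Nat.cast_mul, Nat.mul_factorial_pred (by omega)]
        rw [hrfact]
        field_simp
    have hsupp : ∀ t ∈ tupleSpace r H, p t ≠ 0 →
        Finset.image t Finset.univ ∈ H.edges ∧ ∀ i, w (t i) ≠ 0 := by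
      intro t _ hpt
      have hedge : Finset.image t Finset.univ ∈ H.edges := by
        by_contra hmem
        apply hpt
        simp only [hpdef]
        rw [if_neg hmem, zero_div]
      refine ⟨hedge, fun i => ?_⟩
      intro h0
      apply hpt
      simp only [hpdef]
      rw [if_pos hedge, Finset.prod_eq_zero (Finset.mem_univ i) h0, zero_div]
    have hcoord : coordEnt r H p j0 = ∑ v ∈ H.verts, -(w v * Real.logb 2 (w v)) := by
      rw [coordEnt, pushEnt, ent, EntAux.image_eval r H hV j0]
      refine Finset.sum_congr rfl fun v hv => ?_
      have : (∑ a ∈ (tupleSpace r H).filter (fun a => a j0 = v), p a)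
          = EntAux.mar r H p j0 v := rfl
      rw [this, hmar v hv]
    have hjoint : jointEnt r H p
        = Real.logb 2 Z - (r : ℝ) * ∑ v ∈ H.verts, w v * Real.logb 2 (w v) := by
      rw [jointEnt, ent,
        EntAux.cross_entropy_sum r H w Z hZ p p hp1 hperm hsupp (fun t => rfl) j0]
      congr 1
      congr 1
      exact Finset.sum_congr rfl fun v hv => by rw [hmar v hv]
    refine ⟨p, hprandom, ?_⟩
    have hexp : jointEnt r H p - (r : ℝ) * coordEnt r H p j0 = Real.logb 2 Z := by
      rw [hjoint, hcoord]
      rw [show (∑ v ∈ H.verts, -(w v * Real.logb 2 (w v)))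
        = -∑ v ∈ H.verts, w v * Real.logb 2 (w v) from Finset.sum_neg_distrib _]
      ring
    show blowupDensity r H = (2:ℝ) ^ (jointEnt r H p - (r : ℝ) * coordEnt r H p j0)
    rw [hexp, Real.rpow_logb (by norm_num) (by norm_num) hZ, hZdef, blowupDensity, hlag]
  · -- upper bound
    rintro d ⟨p, ⟨hp0, hp1, hpedge, hpperm⟩, rfl⟩
    show (2:ℝ) ^ (jointEnt r H p - (r : ℝ) * coordEnt r H p j0) ≤ blowupDensity r H
    set m : ℕ → ℝ := EntAux.mar r H p j0 with hmdef
    have hm0 : ∀ v, 0 ≤ m v := EntAux.mar_nonneg r H p hp0 j0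
    have hm1 : ∑ v ∈ H.verts, m v = 1 := by rw [hmdef, EntAux.mar_total]; exact hp1
    have hmt : ∀ t ∈ tupleSpace r H, ∀ i : Fin r, p t ≤ m (t i) := by
      intro t ht i
      have hmem : t ∘ (Equiv.swap j0 i) ∈
          (tupleSpace r H).filter (fun s => s j0 = t i) := by
        rw [Finset.mem_filter]
        constructor
        · exact Fintype.mem_piFinset.mpr fun k => (Fintype.mem_piFinset.mp ht) _
        · simp [Equiv.swap_apply_left]
      calc p t = p (t ∘ Equiv.swap j0 i) := (hpperm (Equiv.swap j0 i) t).symm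
        _ ≤ m (t i) := Finset.single_le_sum (fun s _ => hp0 s) hmem
    obtain ⟨t0, ht0TS, ht0⟩ : ∃ t ∈ tupleSpace r H, 0 < p t := by
      by_contra hcon
      push_neg at hcon
      have : ∑ t ∈ tupleSpace r H, p t = 0 :=
        Finset.sum_eq_zero fun t ht => le_antisymm (hcon t ht) (hp0 t)
      rw [hp1] at this
      norm_num at this
    have he0 : Finset.image t0 Finset.univ ∈ H.edges := hpedge t0 ht0.ne'
    have hSm : 0 < EntAux.S H m := by
      have hprod : 0 < ∏ x ∈ Finset.image t0 Finset.univ, m x := by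
        refine Finset.prod_pos fun x hx => ?_
        obtain ⟨i, _, rfl⟩ := Finset.mem_image.mp hx
        exact lt_of_lt_of_le ht0 (hmt t0 ht0TS i)
      exact lt_of_lt_of_le hprod (Finset.single_le_sum (f := fun e => ∏ x ∈ e, m x)
        (fun e _ => Finset.prod_nonneg fun x _ => hm0 x) he0)
    set Z : ℝ := (r.factorial : ℝ) * EntAux.S H m with hZdef
    have hZ : 0 < Z := mul_pos hfact hSm
    set q : (Fin r → ℕ) → ℝ := fun t =>
      (if Finset.image t Finset.univ ∈ H.edges then (∏ i, m (t i)) else 0) / Z with hqdef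
    have hq0 : ∀ t, 0 ≤ q t := by
      intro t
      simp only [hqdef]
      split
      · exact div_nonneg (Finset.prod_nonneg fun i _ => hm0 (t i)) hZ.le
      · rw [zero_div]
    have hq1 : ∑ t ∈ tupleSpace r H, q t = 1 := by
      simp only [hqdef]
      rw [← Finset.sum_div, EntAux.sum_tuples_edge r H hH m, ← hZdef, div_self hZ.ne']
    have hsupp : ∀ t ∈ tupleSpace r H, p t ≠ 0 →
        Finset.image t Finset.univ ∈ H.edges ∧ ∀ i, m (t i) ≠ 0 := by
      intro t ht hpt
      have hppos : 0 < p t := lt_of_le_of_ne (hp0 t) (Ne.symm hpt)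
      exact ⟨hpedge t hpt, fun i => (lt_of_lt_of_le hppos (hmt t ht i)).ne'⟩
    have hqt : ∀ t ∈ tupleSpace r H, p t ≠ 0 → 0 < q t := by
      intro t ht hpt
      obtain ⟨hedge, hmne⟩ := hsupp t ht hpt
      simp only [hqdef]
      rw [if_pos hedge]
      refine div_pos (Finset.prod_pos fun i _ => ?_) hZ
      exact lt_of_le_of_ne (hm0 (t i)) (Ne.symm (hmne i))
    have hgibbs : ∑ t ∈ tupleSpace r H, p t * (Real.log (q t) - Real.log (p t)) ≤ 0 := by
      have hbound : ∀ t ∈ tupleSpace r H,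
          p t * (Real.log (q t) - Real.log (p t)) ≤ q t - p t := by
        intro t ht
        by_cases hpt : p t = 0
        · rw [hpt]; simpa using hq0 t
        · have hppos : 0 < p t := lt_of_le_of_ne (hp0 t) (Ne.symm hpt)
          have hqpos := hqt t ht hpt
          have hlog := Real.log_le_sub_one_of_pos (div_pos hqpos hppos)
          rw [Real.log_div hqpos.ne' hppos.ne'] at hlog
          calc p t * (Real.log (q t) - Real.log (p t))
              ≤ p t * (q t / p t - 1) := mul_le_mul_of_nonneg_left hlog hppos.le
            _ = q t - p t := by field_simp
      calc ∑ t ∈ tupleSpace r H, p t * (Real.log (q t) - Real.log (p t))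
          ≤ ∑ t ∈ tupleSpace r H, (q t - p t) := Finset.sum_le_sum hbound
        _ = 1 - 1 := by rw [Finset.sum_sub_distrib, hq1, hp1]
        _ = 0 := by ring
    have hcross : jointEnt r H p ≤ ∑ t ∈ tupleSpace r H, -(p t * Real.logb 2 (q t)) := by
      rw [jointEnt, ent, ← sub_nonpos]
      have heq : ∑ t ∈ tupleSpace r H, -(p t * Real.logb 2 (p t))
            - ∑ t ∈ tupleSpace r H, -(p t * Real.logb 2 (q t))
          = (Real.log 2)⁻¹ * ∑ t ∈ tupleSpace r H, p t * (Real.log (q t) - Real.log (p t)) := by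
        rw [← Finset.sum_sub_distrib, Finset.mul_sum]
        refine Finset.sum_congr rfl fun t _ => ?_
        simp only [Real.logb, div_eq_inv_mul]
        ring
      rw [heq]
      exact mul_nonpos_of_nonneg_of_nonpos (inv_nonneg.mpr (Real.log_nonneg one_le_two)) hgibbs
    have hcross2 : ∑ t ∈ tupleSpace r H, -(p t * Real.logb 2 (q t))
        = Real.logb 2 Z - (r : ℝ) * ∑ v ∈ H.verts, m v * Real.logb 2 (m v) :=
      EntAux.cross_entropy_sum r H m Z hZ p q hp1 hpperm hsupp (fun t => rfl) j0
    have hcoord : coordEnt r H p j0 = ∑ v ∈ H.verts, -(m v * Real.logb 2 (m v)) := by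
      rw [coordEnt, pushEnt, ent, EntAux.image_eval r H hV j0]
      exact Finset.sum_congr rfl fun v _ => rfl
    have hexp : jointEnt r H p - (r : ℝ) * coordEnt r H p j0 ≤ Real.logb 2 Z := by
      have h1 := le_trans hcross (le_of_eq hcross2)
      rw [hcoord, show (∑ v ∈ H.verts, -(m v * Real.logb 2 (m v)))
        = -∑ v ∈ H.verts, m v * Real.logb 2 (m v) from Finset.sum_neg_distrib _]
      set T := ∑ v ∈ H.verts, m v * Real.logb 2 (m v)
      linarith
    calc (2:ℝ) ^ (jointEnt r H p - (r : ℝ) * coordEnt r H p j0)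
        ≤ (2:ℝ) ^ Real.logb 2 Z := Real.rpow_le_rpow_of_exponent_le one_le_two hexp
      _ = Z := Real.rpow_logb (by norm_num) (by norm_num) hZ
      _ ≤ blowupDensity r H := by
          rw [hZdef, blowupDensity]
          exact mul_le_mul_of_nonneg_left (EntAux.le_lag H m hm0 hm1) hfact.le
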